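/- arXiv:1903.01838 — 3 statements merged into one kernel-verified Lean document; each statement's English description precedes it below -/
import Mathlib

section
/- Let q be a prime power, m a positive even integer, and α a primitive element (generator of the multiplicative group) of F_{q^m}. For distinct u, v in the set M = {1} ∪ {q^ℓ + 1 : 0 < ℓ < m/2}, the elements α^{-u} and α^{-v} are not conjugate over F_q; that is, there is no s with 0 ≤ s ≤ m-1 such that q^s · u ≡ v (mod q^m - 1). -/
private lemma aux_qpow_mod (q m x : ℕ) (hq : 1 ≤ q) :
    q ^ x ≡ q ^ (x % m) [MOD q ^ m - 1] := by
  have h1 : (1 : ℕ) ≡ q ^ m [MOD q ^ m - 1] :=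
    (Nat.modEq_iff_dvd' (Nat.one_le_pow _ _ hq)).2 dvd_rfl
  calc q ^ x = (q ^ m) ^ (x / m) * q ^ (x % m) := by
        rw [← pow_mul, ← pow_add, Nat.div_add_mod]
    _ ≡ 1 ^ (x / m) * q ^ (x % m) [MOD q ^ m - 1] := ((h1.symm.pow _).mul_right _)
    _ = q ^ (x % m) := by rw [one_pow, one_mul]

private lemma aux_two_pows {q a b ℓ : ℕ} (hq : 2 ≤ q) (hℓ : 0 < ℓ)
    (h : q ^ a + q ^ b = q ^ ℓ + 1) : (a = ℓ ∧ b = 0) ∨ (a = 0 ∧ b = ℓ) := by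
  have hinj := Nat.pow_right_injective hq
  rcases Nat.eq_zero_or_pos a with ha | ha
  · rcases Nat.eq_zero_or_pos b with hb | hb
    · exfalso
      subst ha; subst hb
      simp only [pow_zero] at h
      have h2 : q ≤ q ^ ℓ := Nat.le_self_pow hℓ.ne' q
      omega
    · right
      subst ha
      simp only [pow_zero] at h
      have heq : q ^ b = q ^ ℓ := by omega
      exact ⟨rfl, hinj heq⟩
  · rcases Nat.eq_zero_or_pos b with hb | hb
    · left
      subst hb
      simp only [pow_zero] at h
      have heq : q ^ a = q ^ ℓ := by omega
      exact ⟨hinj heq, rfl⟩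
    · exfalso
      have hd : q ∣ q ^ a + q ^ b :=
        dvd_add (dvd_pow_self q ha.ne') (dvd_pow_self q hb.ne')
      rw [h] at hd
      have hd2 : q ∣ q ^ ℓ := dvd_pow_self q hℓ.ne'
      have h1 : q ∣ 1 := (Nat.dvd_add_right hd2).mp hd
      have := Nat.le_of_dvd one_pos h1
      omega

private lemma aux_not_pow {q a b m : ℕ} (hq : 2 ≤ q) (hab : a < b) (hbm : b < m) :
    q ^ a + q ^ b ≠ q ^ m := by
  intro h
  have h1 : q ^ a * (1 + q ^ (b - a)) = q ^ a * q ^ (m - a) := by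
    rw [mul_add, mul_one, ← pow_add, ← pow_add, Nat.add_sub_cancel' hab.le,
      Nat.add_sub_cancel' (by omega : a ≤ m)]
    exact h
  have h2 : 1 + q ^ (b - a) = q ^ (m - a) :=
    Nat.eq_of_mul_eq_mul_left (pow_pos (by omega : 0 < q) a) h1
  have hd1 : q ∣ q ^ (b - a) := dvd_pow_self q (by omega)
  have hd2 : q ∣ q ^ (m - a) := dvd_pow_self q (by omega)
  have h3 : q ∣ 1 := (Nat.dvd_add_right hd1).mp (by rw [Nat.add_comm] at h2; rw [h2]; exact hd2)
  have := Nat.le_of_dvd one_pos h3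
  omega

private lemma aux_pow_eq_pow {q a b m : ℕ} (hq : 2 ≤ q) (ha : a < m) (hb : b < m)
    (h : q ^ a + q ^ b = q ^ m) : a = b := by
  rcases Nat.lt_trichotomy a b with hlt | heq | hgt
  · exact absurd h (aux_not_pow hq hlt hb)
  · exact heq
  · exact absurd (by rw [Nat.add_comm]; exact h) (aux_not_pow hq hgt ha)

/-- For distinct u, v in M = {1} ∪ {q^ℓ+1 : 0 < ℓ < m/2}, the elements α^{-u}, α^{-v}
are not conjugate over F_q: there is no s, 0 ≤ s ≤ m-1, with q^s·u ≡ v (mod q^m-1). -/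
theorem stmt_3 (q m : ℕ) (hq : IsPrimePow q) (hm : 0 < m) (hme : Even m)
    (u v : ℕ)
    (hu : u = 1 ∨ ∃ ℓ, 0 < ℓ ∧ ℓ < m / 2 ∧ u = q ^ ℓ + 1)
    (hv : v = 1 ∨ ∃ ℓ, 0 < ℓ ∧ ℓ < m / 2 ∧ v = q ^ ℓ + 1)
    (huv : u ≠ v) (s : ℕ) (hs : s ≤ m - 1) :
    ¬ (q ^ s * u ≡ v [MOD q ^ m - 1]) := by
  intro h
  have hq2 : 2 ≤ q := hq.two_le
  have hm2 : 2 ≤ m := by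
    have := hme.two_dvd
    omega
  have hmm : m = 2 * (m / 2) := by
    have := hme.two_dvd
    omega
  have hsm : s < m := by omega
  -- q^m is big
  have hqm1 : q ^ (m - 1) * 2 ≤ q ^ m := by
    calc q ^ (m - 1) * 2 ≤ q ^ (m - 1) * q := by
          exact Nat.mul_le_mul_left _ hq2
      _ = q ^ m := by rw [← pow_succ]; congr 1; omega
  have hqm2 : q ^ (m - 2) * 4 ≤ q ^ m := by
    calc q ^ (m - 2) * 4 ≤ q ^ (m - 2) * (q * q) := by
          exact Nat.mul_le_mul_left _ (by nlinarith)
      _ = q ^ m := by rw [← mul_assoc, ← pow_succ, ← pow_succ]; congr 1; omega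
  have hpow_mono : ∀ x : ℕ, x < m → q ^ x ≤ q ^ (m - 1) := fun x hx =>
    Nat.pow_le_pow_right (by omega) (by omega)
  -- v bound : v < q^m - 1 and 1 ≤ v
  have hv_lt : v < q ^ m - 1 := by
    rcases hv with rfl | ⟨ℓ, hℓ0, hℓ, rfl⟩
    · have : 4 ≤ q ^ m := by
        have := Nat.one_le_pow (m - 2) q (by omega)
        omega
      omega
    · have hb : q ^ ℓ ≤ q ^ (m - 2) := Nat.pow_le_pow_right (by omega) (by omega)
      have := Nat.one_le_pow (m - 2) q (by omega)
      omega
  have hv_pos : 1 ≤ v := by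
    rcases hv with rfl | ⟨ℓ, hℓ0, hℓ, rfl⟩ <;> omega
  rcases hu with rfl | ⟨k, hk0, hk, rfl⟩
  · -- u = 1 : q^s ≡ v, q^s < q^m - 1, so q^s = v
    rw [mul_one] at h
    have hslt : q ^ s < q ^ m - 1 := by
      have := hpow_mono s hsm
      have := Nat.one_le_pow (m - 1) q (by omega)
      omega
    have heq : q ^ s = v := h.eq_of_lt_of_lt hslt hv_lt
    rcases hv with rfl | ⟨ℓ, hℓ0, hℓ, rfl⟩
    · -- v = 1 : but u = 1 too, contradiction with huv
      exact huv rfl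
    · -- q^s = q^ℓ + 1
      rcases Nat.eq_zero_or_pos s with hs0 | hs0
      · subst hs0
        simp only [pow_zero] at heq
        have := Nat.one_le_pow ℓ q (by omega)
        omega
      · have hd : q ∣ q ^ s := dvd_pow_self q hs0.ne'
        rw [heq] at hd
        have hd2 : q ∣ q ^ ℓ := dvd_pow_self q hℓ0.ne'
        have h1 : q ∣ 1 := (Nat.dvd_add_right hd2).mp hd
        have := Nat.le_of_dvd one_pos h1
        omega
  · -- u = q^k + 1
    set a := (s + k) % m with ha_def
    have ham : a < m := Nat.mod_lt _ (by omega)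
    have hA : q ^ s * (q ^ k + 1) ≡ q ^ a + q ^ s [MOD q ^ m - 1] := by
      have : q ^ s * (q ^ k + 1) = q ^ (s + k) + q ^ s := by ring
      rw [this]
      exact (aux_qpow_mod q m (s + k) (by omega)).add_right _
    have h2 : q ^ a + q ^ s ≡ v [MOD q ^ m - 1] := hA.symm.trans h
    have hAle : q ^ a + q ^ s ≤ q ^ m := by
      have := hpow_mono a ham
      have := hpow_mono s hsm
      omega
    have hApos : 2 ≤ q ^ a + q ^ s := by
      have := Nat.one_le_pow a q (by omega)
      have := Nat.one_le_pow s q (by omega)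
      omega
    have hkm : k % m = k := Nat.mod_eq_of_lt (by omega)
    rcases Nat.lt_or_ge (q ^ a + q ^ s) (q ^ m - 1) with hlt | hge
    · -- equality q^a + q^s = v
      have heq : q ^ a + q ^ s = v := h2.eq_of_lt_of_lt hlt hv_lt
      rcases hv with rfl | ⟨ℓ, hℓ0, hℓ, rfl⟩
      · omega
      · rcases aux_two_pows hq2 hℓ0 heq with ⟨h1, h0⟩ | ⟨h0, h1⟩
        · -- a = ℓ, s = 0 : then a = k % m = k, so k = ℓ, u = v
          subst h0
          rw [ha_def] at h1
          simp only [Nat.zero_add, hkm] at h1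
          exact huv (by rw [h1])
        · -- a = 0, s = ℓ : then m ∣ s + k, 0 < s + k < m
          have hdvd : m ∣ s + k := Nat.dvd_of_mod_eq_zero h0
          have hlt2 : s + k < m := by omega
          have hz : s + k = 0 := Nat.eq_zero_of_dvd_of_lt hdvd hlt2
          omega
    · -- q^a + q^s = q^m - 1 or q^m
      rcases Nat.lt_or_ge (q ^ a + q ^ s) (q ^ m) with hlt2 | hge2
      · -- = q^m - 1, so v ≡ 0 mod q^m - 1, but 1 ≤ v < q^m - 1
        have hAeq : q ^ a + q ^ s = q ^ m - 1 := by omega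
        have : (0 : ℕ) ≡ v [MOD q ^ m - 1] := by
          have : q ^ m - 1 ≡ v [MOD q ^ m - 1] := hAeq ▸ h2
          simpa [Nat.ModEq, Nat.mod_self] using this
        have : v % (q ^ m - 1) = 0 := by
          have h0 := this.symm
          simpa [Nat.ModEq] using h0
        rw [Nat.mod_eq_of_lt hv_lt] at this
        omega
      · -- = q^m, so a = s, m ∣ k, contradiction
        have hAeq : q ^ a + q ^ s = q ^ m := by omega
        have has : a = s := aux_pow_eq_pow hq2 ham hsm hAeq
        have hsk : (s + k) % m = s % m := by
          rw [← ha_def, has, Nat.mod_eq_of_lt hsm]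
        have hdvd : m ∣ k := by
          have : s + k ≡ s + 0 [MOD m] := by
            simpa [Nat.ModEq] using hsk
          have := (Nat.ModEq.add_left_cancel' s this)
          exact (Nat.modEq_zero_iff_dvd).mp this
        have := Nat.le_of_dvd hk0 hdvd
        omega
end

section
/- Let q be a prime power, m a positive even integer. For every u in the set M = {1} ∪ {q^ℓ + 1 : 0 < ℓ < m/2}, the smallest positive integer m_u ≤ m with q^{m_u} · u ≡ u (mod q^m - 1) is m_u = m. -/
/-- For u ∈ M = {1} ∪ {q^ℓ+1 : 0 < ℓ < m/2}, the q-cyclotomic coset of u mod q^m-1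
has full size m: the least positive t with q^t·u ≡ u (mod q^m-1) is m. -/
theorem stmt_4 (q m : ℕ) (hq : IsPrimePow q) (hm : 0 < m) (hme : Even m)
    (u : ℕ) (hu : u = 1 ∨ ∃ ℓ, 0 < ℓ ∧ ℓ < m / 2 ∧ u = q ^ ℓ + 1) :
    IsLeast {t : ℕ | 0 < t ∧ q ^ t * u ≡ u [MOD q ^ m - 1]} m := by
  have hq2 : 2 ≤ q := hq.two_le
  have hm2 : 2 ≤ m := by
    obtain ⟨r, hr⟩ := hme; omega
  have hNpos : 1 ≤ q ^ m := Nat.one_le_pow _ _ (by omega)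
  have h1 : q ^ m ≡ 1 [MOD q ^ m - 1] :=
    ((Nat.modEq_iff_dvd' hNpos).mpr dvd_rfl).symm
  have hq4 : 4 ≤ q ^ m := by
    calc 4 = 2 ^ 2 := rfl
      _ ≤ q ^ 2 := Nat.pow_le_pow_left hq2 2
      _ ≤ q ^ m := Nat.pow_le_pow_right (by omega) hm2
  constructor
  · refine ⟨hm, ?_⟩
    simpa using h1.mul_right u
  · rintro t ⟨ht0, hmod⟩
    by_contra hlt
    push_neg at hlt
    -- auxiliary bound facts
    have hpow_lt : ∀ s : ℕ, s < m → q ^ s < q ^ m :=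
      fun s hs => Nat.pow_lt_pow_right (by omega) hs
    rcases hu with rfl | ⟨ℓ, hℓ0, hℓ2, rfl⟩
    · -- u = 1
      have hqt : q ^ t < q ^ m - 1 := by
        have h1 : q ^ t ≤ q ^ (m-1) := Nat.pow_le_pow_right (by omega) (by omega)
        have h2 : 2 * q ^ (m-1) ≤ q ^ m := by
          calc 2 * q ^ (m-1) ≤ q * q ^ (m-1) := Nat.mul_le_mul_right _ hq2
            _ = q ^ m := by rw [← pow_succ']; congr 1; omega
        have h3 : 2 ≤ q ^ (m-1) := by
          calc 2 ≤ q := hq2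
            _ = q ^ 1 := (pow_one q).symm
            _ ≤ q ^ (m-1) := Nat.pow_le_pow_right (by omega) (by omega)
        omega
      have hmod' : q ^ t % (q ^ m - 1) = 1 % (q ^ m - 1) := by simpa [Nat.ModEq] using hmod
      rw [Nat.mod_eq_of_lt hqt, Nat.mod_eq_of_lt (by omega)] at hmod'
      have : 2 ≤ q ^ t := by
        calc 2 ≤ q := hq2
          _ = q ^ 1 := (pow_one q).symm
          _ ≤ q ^ t := Nat.pow_le_pow_right (by omega) (by omega)
      omega
    · -- u = q^ℓ + 1
      have h2ℓ : 2 * ℓ < m := by omega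
      have hm4 : 4 ≤ m := by omega
      set N := q ^ m - 1 with hN
      set a := (t + ℓ) % m with ha
      have ham : a < m := Nat.mod_lt _ (by omega)
      have hane : a ≠ t := by
        intro hat
        have htm : t % m = t := Nat.mod_eq_of_lt hlt
        have hmm : Nat.ModEq m t (t + ℓ) := by unfold Nat.ModEq; omega
        have hdd : m ∣ t + ℓ - t := (Nat.modEq_iff_dvd' (by omega)).mp hmm
        simp only [Nat.add_sub_cancel_left] at hdd
        have := Nat.le_of_dvd hℓ0 hdd
        omega
      have hsplit : m * ((t + ℓ) / m) + (t + ℓ) % m = t + ℓ := Nat.div_add_mod _ _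
      have hcong : q ^ (t + ℓ) ≡ q ^ a [MOD N] := by
        conv_lhs => rw [← hsplit]
        rw [pow_add, pow_mul]
        calc (q ^ m) ^ ((t + ℓ) / m) * q ^ a
            ≡ 1 ^ ((t + ℓ) / m) * q ^ a [MOD N] := Nat.ModEq.mul_right _ (h1.pow _)
          _ = q ^ a := by rw [one_pow, one_mul]
      have hmain : q ^ a + q ^ t ≡ q ^ ℓ + 1 [MOD N] := by
        calc q ^ a + q ^ t ≡ q ^ (t + ℓ) + q ^ t [MOD N] := (hcong.symm.add_right _)
          _ = q ^ t * (q ^ ℓ + 1) := by ring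
          _ ≡ q ^ ℓ + 1 [MOD N] := hmod
      -- size bounds
      have hx4 : 4 ≤ q ^ (m - 2) := by
        calc 4 = 2 ^ 2 := rfl
          _ ≤ q ^ (m - 2) := Nat.pow_le_pow_left hq2 2 |>.trans
              (Nat.pow_le_pow_right (by omega) (by omega))
      have hkey : q ^ (m - 1) + q ^ (m - 2) + 1 < q ^ m := by
        have e1 : q ^ (m - 1) = q * q ^ (m - 2) := by
          rw [← pow_succ']; congr 1; omega
        have e2 : q ^ m = q ^ 2 * q ^ (m - 2) := by
          rw [← pow_add]; congr 1; omega
        have hq' : q + 2 ≤ q ^ 2 := by nlinarith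
        rw [e1, e2]
        calc q * q ^ (m - 2) + q ^ (m - 2) + 1
            < q * q ^ (m - 2) + 2 * q ^ (m - 2) := by omega
          _ = (q + 2) * q ^ (m - 2) := by ring
          _ ≤ q ^ 2 * q ^ (m - 2) := Nat.mul_le_mul_right _ hq'
      have hbound : ∀ s r : ℕ, s < m → r < m → s ≠ r → q ^ s + q ^ r < N := by
        intro s r hs hr hsr
        rcases Nat.lt_or_ge s r with h | h
        · have h1 : q ^ s ≤ q ^ (m - 2) := Nat.pow_le_pow_right (by omega) (by omega)
          have h2 : q ^ r ≤ q ^ (m - 1) := Nat.pow_le_pow_right (by omega) (by omega)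
          omega
        · have h' : r < s := by omega
          have h1 : q ^ r ≤ q ^ (m - 2) := Nat.pow_le_pow_right (by omega) (by omega)
          have h2 : q ^ s ≤ q ^ (m - 1) := Nat.pow_le_pow_right (by omega) (by omega)
          omega
      have hlhs : q ^ a + q ^ t < N := hbound a t ham hlt hane
      have hrhs : q ^ ℓ + 1 < N := by
        have h1 : q ^ ℓ ≤ q ^ (m - 2) := Nat.pow_le_pow_right (by omega) (by omega)
        have h2 : 1 ≤ q ^ (m - 1) := Nat.one_le_pow _ _ (by omega)
        omega
      have heq : q ^ a + q ^ t = q ^ ℓ + 1 := by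
        have := hmain
        unfold Nat.ModEq at this
        rwa [Nat.mod_eq_of_lt hlhs, Nat.mod_eq_of_lt hrhs] at this
      -- final contradiction
      rcases Nat.eq_zero_or_pos a with ha0 | hapos
      · rw [ha0, pow_zero] at heq
        have htℓ : q ^ t = q ^ ℓ := by omega
        have : t = ℓ := Nat.pow_right_injective hq2 htℓ
        subst this
        rw [ha0] at ha
        rw [Nat.mod_eq_of_lt (by omega : t + t < m)] at ha
        omega
      · have d1 : q ∣ q ^ a := dvd_pow_self q (by omega)
        have d2 : q ∣ q ^ t := dvd_pow_self q (by omega)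
        have d3 : q ∣ q ^ ℓ := dvd_pow_self q (by omega)
        have : q ∣ 1 := by
          have h' : q ∣ q ^ ℓ + 1 := heq ▸ (d1.add d2)
          exact (Nat.dvd_add_right d3).mp h'
        have := Nat.le_of_dvd one_pos this
        omega
end

section
/- Suppose 0 < ℓ₁ < ℓ₂ < m/2 and 0 ≤ s ≤ m-1 are integers and q ≥ 2. Then q^s(q^{ℓ₁} + 1) is not congruent to q^{ℓ₂} + 1 modulo q^m - 1. -/
private lemma pow_mod_cycle (q m a : ℕ) (hq : 1 ≤ q) :
    q ^ a ≡ q ^ (a % m) [MOD q ^ m - 1] := by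
  conv_lhs => rw [← Nat.div_add_mod a m]
  rw [pow_add, pow_mul]
  have h1 : (1 : ℕ) ≡ q ^ m [MOD q ^ m - 1] :=
    (Nat.modEq_iff_dvd' (Nat.one_le_pow _ _ hq)).mpr dvd_rfl
  calc (q ^ m) ^ (a / m) * q ^ (a % m)
      ≡ 1 ^ (a / m) * q ^ (a % m) [MOD q ^ m - 1] :=
        Nat.ModEq.mul_right _ (h1.symm.pow _)
    _ = q ^ (a % m) := by rw [one_pow, one_mul]

/-- For 0 < ℓ₁ < ℓ₂ < m/2 and 0 ≤ s ≤ m-1, q ≥ 2: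
q^s(q^{ℓ₁}+1) ≢ q^{ℓ₂}+1 (mod q^m-1). -/
theorem stmt_5 (q m ℓ₁ ℓ₂ s : ℕ) (hq : 2 ≤ q) (h1 : 0 < ℓ₁) (h12 : ℓ₁ < ℓ₂)
    (h2 : ℓ₂ < m / 2) (hs : s ≤ m - 1) :
    ¬ (q ^ s * (q ^ ℓ₁ + 1) ≡ q ^ ℓ₂ + 1 [MOD q ^ m - 1]) := by
  intro h
  have hq1 : 1 ≤ q := by omega
  have hm : 0 < m := by omega
  set a := (s + ℓ₁) % m with ha
  set b := s % m with hb
  -- reduce LHS exponents mod m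
  have hred : q ^ a + q ^ b ≡ q ^ ℓ₂ + 1 [MOD q ^ m - 1] := by
    calc q ^ a + q ^ b
        ≡ q ^ (s + ℓ₁) + q ^ s [MOD q ^ m - 1] :=
          Nat.ModEq.add ((pow_mod_cycle q m _ hq1).symm) ((pow_mod_cycle q m _ hq1).symm)
      _ = q ^ s * (q ^ ℓ₁ + 1) := by ring
      _ ≡ q ^ ℓ₂ + 1 [MOD q ^ m - 1] := h
  -- bounds
  have ham : a ≤ m - 1 := by have := Nat.mod_lt (s + ℓ₁) hm; omega
  have hbm : b ≤ m - 1 := by have := Nat.mod_lt s hm; omega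
  have hA : q ^ a ≤ q ^ (m - 1) := Nat.pow_le_pow_right hq1 ham
  have hB : q ^ b ≤ q ^ (m - 1) := Nat.pow_le_pow_right hq1 hbm
  have hL2 : q ^ ℓ₂ ≤ q ^ (m - 1) := Nat.pow_le_pow_right hq1 (by omega)
  have hqm : q ^ m = q * q ^ (m - 1) := by
    conv_lhs => rw [show m = (m - 1) + 1 by omega]
    rw [pow_succ]; ring
  have hA1 : 1 ≤ q ^ a := Nat.one_le_pow _ _ (by omega)
  have hB1 : 1 ≤ q ^ b := Nat.one_le_pow _ _ (by omega)
  have hL1 : 1 ≤ q ^ (m - 1) := Nat.one_le_pow _ _ (by omega)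
  have hmul : 2 * q ^ (m - 1) ≤ q * q ^ (m - 1) := Nat.mul_le_mul_right _ hq
  have hL0 : 1 ≤ q ^ ℓ₂ := Nat.one_le_pow _ _ (by omega)
  have hqm2 : 2 ≤ q ^ m := by omega
  -- from congruence to equality
  have heq : q ^ a + q ^ b = q ^ ℓ₂ + 1 := by
    have hx1 : q ^ a + q ^ b ≤ q ^ m := by omega
    have hy1 : q ^ ℓ₂ + 1 ≤ q ^ m := by omega
    rcases le_total (q ^ a + q ^ b) (q ^ ℓ₂ + 1) with hle | hle
    · have hd := (Nat.modEq_iff_dvd' hle).mp hred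
      have hz := Nat.eq_zero_of_dvd_of_lt hd (by omega)
      omega
    · have hd := (Nat.modEq_iff_dvd' hle).mp hred.symm
      have hz := Nat.eq_zero_of_dvd_of_lt hd (by omega)
      omega
  -- casework on a, b
  have hLq : q ∣ q ^ ℓ₂ := dvd_pow_self q (by omega)
  by_cases hb0 : b = 0
  · -- s % m = 0 with s ≤ m-1 gives s = 0, so a = ℓ₁
    have hs0 : s = 0 := by
      have := Nat.mod_lt s hm
      have : s % m = s := Nat.mod_eq_of_lt (by omega)
      omega
    have hℓ₁m : ℓ₁ < m := by omega
    have ha' : a = ℓ₁ := by rw [ha, hs0, zero_add, Nat.mod_eq_of_lt hℓ₁m]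
    rw [ha', hb0, pow_zero] at heq
    have : q ^ ℓ₁ = q ^ ℓ₂ := by omega
    have := Nat.pow_right_injective hq this
    omega
  · by_cases ha0 : a = 0
    · -- 1 + q^b = q^ℓ₂ + 1, so b = ℓ₂
      rw [ha0, pow_zero] at heq
      have hbl : q ^ b = q ^ ℓ₂ := by omega
      have hbeq : b = ℓ₂ := Nat.pow_right_injective hq hbl
      -- a = 0 means m ∣ s + ℓ₁, and 0 < s + ℓ₁ < 2m so s + ℓ₁ = m
      have hdvd' : m ∣ s + ℓ₁ := Nat.dvd_of_mod_eq_zero ha0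
      have hsl : s + ℓ₁ = m := by
        rcases hdvd' with ⟨k, hk⟩
        have hk2 : k < 2 := by
          by_contra hh
          push_neg at hh
          have : m * 2 ≤ m * k := Nat.mul_le_mul_left m hh
          omega
        interval_cases k <;> omega
      have hsm : s < m := by omega
      have : b = s := by rw [hb, Nat.mod_eq_of_lt hsm]
      -- so ℓ₂ = s = m - ℓ₁, i.e. ℓ₁ + ℓ₂ = m, contradicting ℓ₁ < ℓ₂ < m/2
      omega
    · -- both a,b > 0: q divides LHS, so q ∣ 1
      have hqa : q ∣ q ^ a := dvd_pow_self q ha0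
      have hqb : q ∣ q ^ b := dvd_pow_self q hb0
      have : q ∣ 1 := by
        have h1 : q ∣ q ^ ℓ₂ + 1 := heq ▸ Nat.dvd_add hqa hqb
        exact (Nat.dvd_add_right hLq).mp h1
      have := Nat.le_of_dvd one_pos this
      omega
end
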